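/- Let r ≥ 2, μ a character of (O_v/π^r)^* with conductor exactly π^r, and let c ∈ ℂ^*. Then Σ_{x ∈ (O_v/π^r)^*, x+1 a unit} μ^{-1}(x) = 0. Consequently Σ_{x ∈ (O_v/π^r)^*} μ^{-1}(x)·c^{v(x+1)} = μ^{-1}(−1)·(c^r − c^{r−1}), where v(x+1) denotes min(r, the π-adic valuation of a lift of x+1) and terms with x ≡ −1 mod π^r contribute μ^{-1}(−1)c^r. -/

import Mathlib

open scoped Classical

/-- If a finset `S` in a commutative group is stable under right multiplication by `y`,
a weight `w` is invariant under this multiplication on `S`, and `μ y ≠ 1`, then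
the twisted character sum over `S` vanishes. -/
private lemma charSum_aux {G : Type*} [CommGroup G] (μ : G →* ℂˣ) (S : Finset G)
    (w : G → ℂ) (y : G) (hy : ∀ x, x ∈ S ↔ x * y ∈ S) (hw : ∀ x ∈ S, w (x * y) = w x)
    (hμ : μ y ≠ 1) :
    ∑ x ∈ S, (((μ x)⁻¹ : ℂˣ) : ℂ) * w x = 0 := by
  have key : ∑ x ∈ S, (((μ (x * y))⁻¹ : ℂˣ) : ℂ) * w (x * y)
      = ∑ x ∈ S, (((μ x)⁻¹ : ℂˣ) : ℂ) * w x :=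
    Finset.sum_equiv (Equiv.mulRight y) (fun x => by simpa using hy x) (fun x _ => rfl)
  have key2 : ∀ x ∈ S, (((μ (x * y))⁻¹ : ℂˣ) : ℂ) * w (x * y)
      = (((μ y)⁻¹ : ℂˣ) : ℂ) * ((((μ x)⁻¹ : ℂˣ) : ℂ) * w x) := by
    intro x hx
    rw [hw x hx, map_mul, mul_inv]
    push_cast
    ring
  rw [Finset.sum_congr rfl key2, ← Finset.mul_sum] at key
  by_contra hS
  apply hμ
  have h0 : ((((μ y)⁻¹ : ℂˣ) : ℂ) - 1) * (∑ x ∈ S, (((μ x)⁻¹ : ℂˣ) : ℂ) * w x) = 0 := by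
    linear_combination key
  rcases mul_eq_zero.mp h0 with h | h
  · have h1 : (((μ y)⁻¹ : ℂˣ) : ℂ) = 1 := by linear_combination h
    have h2 : ((μ y)⁻¹ : ℂˣ) = 1 := Units.ext (by simpa using h1)
    exact inv_eq_one.mp h2
  · exact absurd h hS

/-- In a DVR, a unit plus a multiple of the uniformizer is a unit. -/
private lemma aux_isUnit_add {R : Type*} [CommRing R] [IsDomain R] [IsDiscreteValuationRing R]
    {π u : R} (hπ : Irreducible π) (hu : IsUnit u) (s : R) : IsUnit (u + π * s) := by
  by_contra h
  have h1 : u + π * s ∈ IsLocalRing.maximalIdeal R := (IsLocalRing.mem_maximalIdeal _).2 h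
  have h2 : π * s ∈ IsLocalRing.maximalIdeal R :=
    Ideal.mul_mem_right _ _ ((IsLocalRing.mem_maximalIdeal _).2 hπ.not_isUnit)
  have h3 : u ∈ IsLocalRing.maximalIdeal R := by
    have := Ideal.sub_mem _ h1 h2; simpa using this
  exact (mem_nonunits_iff.1 ((IsLocalRing.mem_maximalIdeal _).1 h3)) hu

/-- In a DVR, every element is either a unit or divisible by the uniformizer. -/
private lemma aux_unit_or_dvd {R : Type*} [CommRing R] [IsDomain R] [IsDiscreteValuationRing R]
    {π : R} (hπ : Irreducible π) (s : R) : IsUnit s ∨ π ∣ s := by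
  rcases eq_or_ne s 0 with rfl | hs
  · exact Or.inr (dvd_zero π)
  obtain ⟨n, u, rfl⟩ := IsDiscreteValuationRing.eq_unit_mul_pow_irreducible hs hπ
  cases n with
  | zero => exact Or.inl (by simpa using u.isUnit)
  | succ m => exact Or.inr ⟨u * π ^ m, by ring⟩

/-- Key character sums in the twisted-sum-to-newvector lemma, for `r ≥ 2`.  Here `R` is a DVR
with uniformizer `π`, `A = R/π^r`, and `μ` is a character of `A^*` of conductor exactly `π^r`
(nontrivial on the image of `1 + π^{r-1}R`).  `val : A → ℕ` is the truncated valuation: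
`val y = n` if `y = π^n·(unit)` with `n < r`, and `val y = r` if `y = 0`.  Then
`Σ_{x ∈ A^*, x+1 a unit} μ^{-1}(x) = 0`, and
`Σ_{x ∈ A^*} μ^{-1}(x)·c^{val(x+1)} = μ^{-1}(−1)·(c^r − c^{r-1})` for any `c ∈ ℂ^*`. -/
theorem stmt12 {R : Type*} [CommRing R] [IsDomain R] [IsDiscreteValuationRing R]
    (π : R) (hπ : Irreducible π) (r : ℕ) (hr : 2 ≤ r)
    [Fintype (R ⧸ Ideal.span {π ^ r})ˣ]
    (μ : (R ⧸ Ideal.span {π ^ r})ˣ →* ℂˣ)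
    (hcond : ∃ y : (R ⧸ Ideal.span {π ^ r})ˣ,
      (∃ t : R, ((y : R ⧸ Ideal.span {π ^ r}) - 1 =
          Ideal.Quotient.mk (Ideal.span {π ^ r}) (π ^ (r - 1) * t))) ∧ μ y ≠ 1)
    (c : ℂ) (hc : c ≠ 0)
    (val : (R ⧸ Ideal.span {π ^ r}) → ℕ)
    (hval : ∀ (y : R ⧸ Ideal.span {π ^ r}) (n : ℕ) (t : R), n < r → IsUnit t →
      y = Ideal.Quotient.mk (Ideal.span {π ^ r}) (π ^ n * t) → val y = n)
    (hval0 : ∀ y : R ⧸ Ideal.span {π ^ r}, y = 0 → val y = r) :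
    ((∑ x ∈ Finset.univ.filter (fun x : (R ⧸ Ideal.span {π ^ r})ˣ =>
        IsUnit ((x : R ⧸ Ideal.span {π ^ r}) + 1)), (((μ x)⁻¹ : ℂˣ) : ℂ)) = 0) ∧
      (∑ x : (R ⧸ Ideal.span {π ^ r})ˣ,
          (((μ x)⁻¹ : ℂˣ) : ℂ) * c ^ val ((x : R ⧸ Ideal.span {π ^ r}) + 1)) =
        (((μ (-1))⁻¹ : ℂˣ) : ℂ) * (c ^ r - c ^ (r - 1)) := by
  let A := R ⧸ Ideal.span {π ^ r}
  let φ : R →+* A := Ideal.Quotient.mk (Ideal.span {π ^ r})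
  obtain ⟨y, ⟨t, hyt⟩, hμy⟩ := hcond
  -- basic facts
  have hmk0 : ∀ a : R, φ a = 0 ↔ π ^ r ∣ a := by
    intro a
    rw [show (φ a = 0) ↔ a ∈ Ideal.span {π ^ r} from Ideal.Quotient.eq_zero_iff_mem]
    exact Ideal.mem_span_singleton
  have hsurj : ∀ z : A, ∃ a : R, φ a = z := Ideal.Quotient.mk_surjective
  -- the condition `Q z`: z ≡ 1 mod π^{r-1}
  set Q : Aˣ → Prop := fun z => ∃ t : R, ((z : A) - 1 = φ (π ^ (r - 1) * t)) with hQdef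
  have hQy : Q y := ⟨t, hyt⟩
  have hQyinv : Q y⁻¹ := by
    obtain ⟨b, hb⟩ := hsurj ((y⁻¹ : Aˣ) : A)
    refine ⟨-(b * t), ?_⟩
    have h1 : ((y⁻¹ : Aˣ) : A) - 1 = ((y⁻¹ : Aˣ) : A) * (1 - ((y : Aˣ) : A)) := by
      have hyy : ((y⁻¹ : Aˣ) : A) * ((y : Aˣ) : A) = 1 := by
        rw [← Units.val_mul, inv_mul_cancel, Units.val_one]
      rw [mul_sub, hyy, mul_one]
    rw [h1, show (1 : A) - ((y : Aˣ) : A) = -(((y : Aˣ) : A) - 1) by ring, hyt, ← hb,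
      ← map_neg, ← map_mul]
    congr 1
    ring
  -- `P x`: x ≡ -1 mod π^{r-1}
  set P : Aˣ → Prop := fun x => ∃ s : R, ((x : A) + 1 = φ (π ^ (r - 1) * s)) with hPdef
  -- step A : stability of "x+1 is a unit" under multiplication by z with Q z
  have stepA : ∀ z : Aˣ, Q z → ∀ x : Aˣ,
      IsUnit ((x : A) + 1) → IsUnit (((x * z : Aˣ) : A) + 1) := by
    rintro z ⟨t', hzt⟩ x hx
    have hpowd : π ^ r ∣ π ^ (r - 1) * t' * (π ^ (r - 1) * t') := by
      obtain ⟨k, hk⟩ : ∃ k, (r - 1) + (r - 1) = r + k := ⟨r - 2, by omega⟩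
      refine ⟨π ^ k * (t' * t'), ?_⟩
      have hpp : π ^ (r - 1) * π ^ (r - 1) = π ^ r * π ^ k := by
        rw [← pow_add, hk, pow_add]
      linear_combination (t' * t') * hpp
    have hz2 : φ (π ^ (r - 1) * t') * φ (π ^ (r - 1) * t') = 0 := by
      rw [← map_mul, hmk0]; exact hpowd
    have hnil : IsNilpotent ((x : A) * (((z : A)) - 1)) := by
      refine ⟨2, ?_⟩
      rw [hzt, mul_pow, pow_two (φ (π ^ (r - 1) * t')), hz2, mul_zero]
    have heq : ((x : A) + 1) + (x : A) * ((z : A) - 1) = ((x * z : Aˣ) : A) + 1 := by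
      rw [Units.val_mul]; ring
    rw [← heq]
    exact hnil.isUnit_add_left_of_commute hx (Commute.all _ _)
  -- step B : stability of P under multiplication by z with Q z
  have stepB : ∀ z : Aˣ, Q z → ∀ x : Aˣ, P x → P (x * z) := by
    rintro z ⟨t', hzt⟩ x ⟨s, hs⟩
    obtain ⟨b, hb⟩ := hsurj ((x : A))
    refine ⟨s + b * t', ?_⟩
    rw [Units.val_mul,
      show (x : A) * (z : A) + 1 = ((x : A) + 1) + (x : A) * ((z : A) - 1) by ring,
      hs, hzt, ← hb, ← map_mul, ← map_add]
    congr 1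
    ring
  -- step C : on the complement of P, the valuation of x+1 is preserved
  have stepC : ∀ z : Aˣ, Q z → ∀ x : Aˣ, ¬ P x →
      val (((x * z : Aˣ) : A) + 1) = val ((x : A) + 1) := by
    rintro z ⟨t', hzt⟩ x hPx
    obtain ⟨a, ha⟩ := hsurj ((x : A) + 1)
    have hand : ¬ π ^ (r - 1) ∣ a := by
      rintro ⟨s, hs⟩
      exact hPx ⟨s, by rw [← ha, hs]⟩
    have ha0 : a ≠ 0 := fun h => hand (h ▸ dvd_zero _)
    obtain ⟨n, u, hu⟩ := IsDiscreteValuationRing.eq_unit_mul_pow_irreducible ha0 hπ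
    have hnlt : n < r - 1 := by
      by_contra h
      push_neg at h
      exact hand (dvd_trans (pow_dvd_pow π h) ⟨(u : R), by rw [hu]; ring⟩)
    have hx1 : (x : A) + 1 = φ (π ^ n * (u : R)) := by
      rw [← ha, hu]; congr 1; ring
    have hv1 : val ((x : A) + 1) = n := hval _ n (u : R) (by omega) u.isUnit hx1
    obtain ⟨b, hb⟩ := hsurj ((x : A))
    have hpow : π ^ (r - 1) = π ^ n * (π * π ^ (r - 2 - n)) := by
      rw [show π * π ^ (r - 2 - n) = π ^ (1 + (r - 2 - n)) by rw [pow_add, pow_one],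
        ← pow_add]
      congr 1
      omega
    have hkey : ((x * z : Aˣ) : A) + 1
        = φ (π ^ n * ((u : R) + π * (π ^ (r - 2 - n) * (b * t')))) := by
      rw [Units.val_mul,
        show (x : A) * (z : A) + 1 = ((x : A) + 1) + (x : A) * ((z : A) - 1) by ring,
        hx1, hzt, ← hb, ← map_mul, ← map_add]
      congr 1
      linear_combination (b * t') * hpow
    have hu' : IsUnit ((u : R) + π * (π ^ (r - 2 - n) * (b * t'))) :=
      aux_isUnit_add hπ u.isUnit _
    rw [hval _ n _ (by omega) hu' hkey, hv1]
  -- membership stability for the filtered sets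
  have hS1mem : ∀ x : Aˣ, IsUnit ((x : A) + 1) ↔ IsUnit (((x * y : Aˣ) : A) + 1) := by
    intro x
    constructor
    · exact stepA y hQy x
    · intro h
      have := stepA y⁻¹ hQyinv (x * y) h
      rwa [mul_inv_cancel_right] at this
  have hPmem : ∀ x : Aˣ, P x ↔ P (x * y) := by
    intro x
    constructor
    · exact stepB y hQy x
    · intro h
      have := stepB y⁻¹ hQyinv (x * y) h
      rwa [mul_inv_cancel_right] at this
  constructor
  · -- part 1
    have h0 := charSum_aux μ
      (Finset.univ.filter (fun x : Aˣ => IsUnit ((x : A) + 1))) (fun _ => 1) y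
      (fun x => by
        simp only [Finset.mem_filter, Finset.mem_univ, true_and]
        exact hS1mem x)
      (fun x _ => rfl) hμy
    simpa using h0
  · -- part 2
    set W : Finset Aˣ := Finset.univ.filter P with hWdef
    set Wc : Finset Aˣ := Finset.univ.filter (fun x => ¬ P x) with hWcdef
    set g : Aˣ → ℂ := fun x => (((μ x)⁻¹ : ℂˣ) : ℂ) * c ^ val ((x : A) + 1) with hgdef
    have hsplit : (∑ x : Aˣ, g x) = ∑ x ∈ W, g x + ∑ x ∈ Wc, g x :=
      (Finset.sum_filter_add_sum_filter_not Finset.univ P g).symm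
    have hWc0 : ∑ x ∈ Wc, g x = 0 := by
      refine charSum_aux μ Wc (fun x => c ^ val ((x : A) + 1)) y ?_ ?_ hμy
      · intro x
        simp only [hWcdef, Finset.mem_filter, Finset.mem_univ, true_and]
        exact not_congr (hPmem x)
      · intro x hx
        simp only [hWcdef, Finset.mem_filter, Finset.mem_univ, true_and] at hx
        exact congrArg (fun n => c ^ n) (stepC y hQy x hx)
    -- -1 lies in W
    have hneg1A : ((-1 : Aˣ) : A) + 1 = 0 := by
      rw [Units.val_neg, Units.val_one]; ring
    have hneg1P : P (-1) := by
      refine ⟨π, ?_⟩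
      rw [hneg1A]
      symm
      rw [hmk0]
      refine ⟨1, ?_⟩
      rw [mul_one, ← pow_succ]
      congr 1
      omega
    have hneg1W : (-1 : Aˣ) ∈ W := by
      simp only [hWdef, Finset.mem_filter, Finset.mem_univ, true_and]
      exact hneg1P
    have hvneg1 : val (((-1 : Aˣ) : A) + 1) = r := hval0 _ hneg1A
    -- the untwisted sum over W vanishes
    have hW0 : ∑ x ∈ W, (((μ x)⁻¹ : ℂˣ) : ℂ) = 0 := by
      have h0 := charSum_aux μ W (fun _ => 1) y
        (fun x => by
          simp only [hWdef, Finset.mem_filter, Finset.mem_univ, true_and]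
          exact hPmem x)
        (fun x _ => rfl) hμy
      simpa using h0
    -- on W \ {-1} the valuation is r-1
    have hWval : ∀ x ∈ W.erase (-1), val ((x : A) + 1) = r - 1 := by
      intro x hx
      obtain ⟨hxne, hxW⟩ := Finset.mem_erase.mp hx
      simp only [hWdef, Finset.mem_filter, Finset.mem_univ, true_and] at hxW
      obtain ⟨s, hs⟩ := hxW
      have hx1ne : (x : A) + 1 ≠ 0 := by
        intro h0
        apply hxne
        apply Units.ext
        rw [Units.val_neg, Units.val_one]
        linear_combination h0
      have hnds : ¬ π ∣ s := by
        intro ⟨m, hm⟩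
        apply hx1ne
        rw [hs, hmk0]
        refine ⟨m, ?_⟩
        have hps : π ^ r = π ^ (r - 1) * π := by
          rw [← pow_succ]; congr 1; omega
        linear_combination π ^ (r - 1) * hm - m * hps
      have hsu : IsUnit s := (aux_unit_or_dvd hπ s).resolve_right hnds
      exact hval _ (r - 1) s (by omega) hsu hs
    -- assemble the sum over W
    have hWsum : ∑ x ∈ W, g x
        = (((μ (-1))⁻¹ : ℂˣ) : ℂ) * c ^ r + ∑ x ∈ W.erase (-1), g x := by
      rw [← Finset.add_sum_erase W g hneg1W, hgdef]
      simp only [hvneg1]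
    have herase : ∑ x ∈ W.erase (-1), g x
        = (∑ x ∈ W.erase (-1), (((μ x)⁻¹ : ℂˣ) : ℂ)) * c ^ (r - 1) := by
      rw [Finset.sum_mul]
      refine Finset.sum_congr rfl ?_
      intro x hx
      rw [hgdef]
      simp only [hWval x hx]
    have herase2 : ∑ x ∈ W.erase (-1), (((μ x)⁻¹ : ℂˣ) : ℂ)
        = - (((μ (-1))⁻¹ : ℂˣ) : ℂ) := by
      rw [Finset.sum_erase_eq_sub hneg1W, hW0]
      ring
    rw [show (∑ x : Aˣ, (((μ x)⁻¹ : ℂˣ) : ℂ) * c ^ val ((x : A) + 1)) = ∑ x : Aˣ, g x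
      from rfl, hsplit, hWc0, hWsum, herase, herase2]
    ring
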